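/- Let n be a positive natural number and let R = ℤ[t,t⁻¹] be the ring of Laurent polynomials over ℤ. Consider the free R-module M = (Fin (2n) → R) × (Fin (2n) → R), and let N be the R-submodule of M spanned by the elements ((t−1) • e_i + e_{i−1}, 0) and (0, (t⁻¹−1) • e_i + e_{i+1}) for i ∈ Fin (2n), where i+1 and i−1 are taken cyclically in Fin (2n). Then M ⧸ N is isomorphic as an R-module to (R ⧸ Ideal.span {1 − (1−t)^{2n}}) × (R ⧸ Ideal.span {1 − (1−t⁻¹)^{2n}}). -/

import Mathlib

section aux
variable {R : Type*} [CommRing R]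

def ee {m : ℕ} (i : Fin m) : Fin m → R := Pi.single i 1

def cycS (m : ℕ) [NeZero m] (b : R) : Submodule R (Fin m → R) :=
  Submodule.span R (Set.range fun i : Fin m => ee (i + 1) - b • ee i)

theorem cycS_key1 (m : ℕ) (b : R) (i : Fin (m + 1)) :
    ee i - b ^ (i : ℕ) • (ee 0 : Fin (m+1) → R) ∈ cycS (m + 1) b := by
  induction i using Fin.induction with
  | zero => simp
  | succ i ih =>
    have hg : (ee (i.castSucc + 1) : Fin (m+1) → R) - b • ee i.castSucc
        ∈ cycS (m + 1) b := Submodule.subset_span ⟨i.castSucc, rfl⟩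
    rw [Fin.coeSucc_eq_succ] at hg
    have h : (ee i.succ : Fin (m+1) → R) - b ^ (i.succ : ℕ) • ee 0 =
        ((ee i.succ : Fin (m+1) → R) - b • ee i.castSucc)
          + b • ((ee i.castSucc : Fin (m+1) → R) - b ^ (i : ℕ) • ee 0) := by
      rw [Fin.val_succ, pow_succ]
      module
    rw [h]
    exact Submodule.add_mem _ hg (Submodule.smul_mem _ _ ih)

theorem cycS_key2 (m : ℕ) (b : R) :
    ((1 : R) - b ^ (m + 1)) • (ee 0 : Fin (m+1) → R) ∈ cycS (m + 1) b := by
  have hg : (ee (Fin.last m + 1) : Fin (m+1) → R) - b • ee (Fin.last m)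
      ∈ cycS (m + 1) b := Submodule.subset_span ⟨Fin.last m, rfl⟩
  rw [Fin.last_add_one] at hg
  have h1 := cycS_key1 m b (Fin.last m)
  rw [Fin.val_last] at h1
  have h : ((1 : R) - b ^ (m + 1)) • (ee 0 : Fin (m+1) → R) =
      ((ee 0 : Fin (m+1) → R) - b • ee (Fin.last m))
        + b • ((ee (Fin.last m) : Fin (m+1) → R) - b ^ m • ee 0) := by
    rw [pow_succ]
    module
  rw [h]
  exact Submodule.add_mem _ hg (Submodule.smul_mem _ _ h1)

noncomputable def phiS (m : ℕ) (b : R) :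
    (Fin m → R) →ₗ[R] R ⧸ Ideal.span {(1:R) - b ^ m} where
  toFun x := Ideal.Quotient.mk _ (∑ i, x i * b ^ (i : ℕ))
  map_add' x y := by simp [add_mul, Finset.sum_add_distrib]
  map_smul' c x := by
    simp only [Pi.smul_apply, smul_eq_mul, RingHom.id_apply, mul_assoc, ← Finset.mul_sum]
    rw [Algebra.smul_def, Ideal.Quotient.algebraMap_eq, ← map_mul]

theorem phiS_single (m : ℕ) (b : R) (j : Fin m) (r : R) :
    phiS m b (Pi.single j r) = Ideal.Quotient.mk _ (r * b ^ (j : ℕ)) := by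
  have h : phiS m b (Pi.single j r) =
      Ideal.Quotient.mk _ (∑ i, (Pi.single j r : Fin m → R) i * b ^ (i : ℕ)) := rfl
  rw [h]
  congr 1
  simp [Pi.single_apply, ite_mul, Finset.sum_ite_eq']

theorem phiS_ee (m : ℕ) (b : R) (j : Fin m) :
    phiS m b (ee j) = Ideal.Quotient.mk _ (b ^ (j : ℕ)) := by
  rw [ee, phiS_single, one_mul]

theorem ker_phiS (m : ℕ) [NeZero m] (b : R) : LinearMap.ker (phiS m b) = cycS m b := by
  obtain ⟨k, rfl⟩ := Nat.exists_eq_succ_of_ne_zero (NeZero.ne m)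
  apply le_antisymm
  · intro x hx
    rw [LinearMap.mem_ker] at hx
    have hc : (∑ i, x i * b ^ (i : ℕ)) ∈ Ideal.span {(1:R) - b ^ (k+1)} := by
      rwa [← Ideal.Quotient.eq_zero_iff_mem]
    obtain ⟨f, hf⟩ := Ideal.mem_span_singleton'.mp hc
    have h1 : ∑ i, x i • (ee i : Fin (k+1) → R) = x := by
      simp only [ee, ← Pi.single_smul, smul_eq_mul, mul_one, Finset.univ_sum_single]
    have hx2 : x = (∑ i, x i • ((ee i : Fin (k+1) → R) - b ^ (i : ℕ) • ee 0))
        + f • (((1:R) - b ^ (k+1)) • (ee 0 : Fin (k+1) → R)) := by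
      simp only [smul_sub, Finset.sum_sub_distrib, h1, smul_smul, ← Finset.sum_smul, hf]
      abel
    rw [hx2]
    exact Submodule.add_mem _
      (Submodule.sum_mem _ fun i _ => Submodule.smul_mem _ _ (cycS_key1 k b i))
      (Submodule.smul_mem _ _ (cycS_key2 k b))
  · rw [cycS, Submodule.span_le]
    rintro v ⟨i, rfl⟩
    simp only [SetLike.mem_coe, LinearMap.mem_ker, map_sub, map_smul, phiS_ee]
    by_cases h : i = Fin.last k
    · subst h
      rw [Fin.last_add_one]
      simp only [Fin.val_zero, pow_zero, Fin.val_last]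
      rw [Algebra.smul_def, Ideal.Quotient.algebraMap_eq, ← map_mul, ← map_sub,
        Ideal.Quotient.eq_zero_iff_mem, ← pow_succ']
      exact Ideal.subset_span rfl
    · have hv : ((i + 1 : Fin (k+1)) : ℕ) = (i : ℕ) + 1 := by
        rw [Fin.val_add_one, if_neg h]
      rw [hv, Algebra.smul_def, Ideal.Quotient.algebraMap_eq, ← map_mul, ← map_sub]
      rw [← pow_succ']
      simp

theorem phiS_surjective (m : ℕ) [NeZero m] (b : R) : Function.Surjective (phiS m b) := by
  intro y
  obtain ⟨r, rfl⟩ := Ideal.Quotient.mk_surjective y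
  exact ⟨Pi.single 0 r, by simp [phiS_single, Fin.val_zero]⟩

noncomputable def cycSEquiv (m : ℕ) [NeZero m] (b : R) :
    ((Fin m → R) ⧸ cycS m b) ≃ₗ[R] R ⧸ Ideal.span {(1:R) - b ^ m} :=
  (Submodule.quotEquivOfEq _ _ (ker_phiS m b).symm).trans
    ((phiS m b).quotKerEquivOfSurjective (phiS_surjective m b))



def cycP (m : ℕ) [NeZero m] (a : R) : Submodule R (Fin m → R) :=
  Submodule.span R (Set.range fun i : Fin m => ee (i - 1) - a • ee i)

theorem fin_zero_sub_one (m : ℕ) : (0 : Fin (m+1)) - 1 = Fin.last m := by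
  ext
  rw [Fin.coe_sub_one, if_pos rfl, Fin.val_last]

theorem fin_succ_sub_one (m : ℕ) (i : Fin m) : i.succ - 1 = i.castSucc := by
  ext
  rw [Fin.coe_sub_one, if_neg (Fin.succ_ne_zero i), Fin.val_succ, Fin.coe_castSucc,
    Nat.add_sub_cancel]

theorem cycP_key (m : ℕ) (a : R) (i : Fin (m + 1)) :
    ee i - a ^ (m + 1 - (i : ℕ)) • (ee 0 : Fin (m+1) → R) ∈ cycP (m + 1) a := by
  induction i using Fin.reverseInduction with
  | last =>
    have hg : (ee ((0 : Fin (m+1)) - 1) : Fin (m+1) → R) - a • ee 0 ∈ cycP (m+1) a :=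
      Submodule.subset_span ⟨0, rfl⟩
    rw [fin_zero_sub_one] at hg
    have he : m + 1 - ((Fin.last m : Fin (m+1)) : ℕ) = 1 := by
      rw [Fin.val_last]; omega
    rw [he, pow_one]
    exact hg
  | cast i ih =>
    have hg : (ee (i.succ - 1) : Fin (m+1) → R) - a • ee i.succ ∈ cycP (m+1) a :=
      Submodule.subset_span ⟨i.succ, rfl⟩
    rw [fin_succ_sub_one] at hg
    have he : m + 1 - ((i.castSucc : Fin (m+1)) : ℕ) = (m + 1 - ((i.succ : Fin (m+1)) : ℕ)) + 1 := by
      rw [Fin.coe_castSucc, Fin.val_succ]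
      omega
    have h : (ee i.castSucc : Fin (m+1) → R) - a ^ (m + 1 - ((i.castSucc : Fin (m+1)) : ℕ)) • ee 0 =
        ((ee i.castSucc : Fin (m+1) → R) - a • ee i.succ)
          + a • ((ee i.succ : Fin (m+1) → R) - a ^ (m + 1 - ((i.succ : Fin (m+1)) : ℕ)) • ee 0) := by
      rw [he, pow_succ']
      module
    rw [h]
    exact Submodule.add_mem _ hg (Submodule.smul_mem _ _ ih)

theorem cycP_key2 (m : ℕ) [NeZero m] (a : R) :
    ((1 : R) - a ^ m) • (ee 0 : Fin m → R) ∈ cycP m a := by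
  obtain ⟨k, rfl⟩ := Nat.exists_eq_succ_of_ne_zero (NeZero.ne m)
  have h := cycP_key k a 0
  rw [Fin.val_zero, Nat.sub_zero] at h
  have e : ((1 : R) - a ^ (k+1)) • (ee 0 : Fin (k+1) → R) =
      ee 0 - a ^ (k+1) • (ee 0 : Fin (k+1) → R) := by module
  rw [e]
  exact h

noncomputable def phiP (m : ℕ) (a : R) :
    (Fin m → R) →ₗ[R] R ⧸ Ideal.span {(1:R) - a ^ m} where
  toFun x := Ideal.Quotient.mk _ (∑ i, x i * a ^ (m - (i : ℕ)))
  map_add' x y := by simp [add_mul, Finset.sum_add_distrib]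
  map_smul' c x := by
    simp only [Pi.smul_apply, smul_eq_mul, RingHom.id_apply, mul_assoc, ← Finset.mul_sum]
    rw [Algebra.smul_def, Ideal.Quotient.algebraMap_eq, ← map_mul]

theorem phiP_single (m : ℕ) (a : R) (j : Fin m) (r : R) :
    phiP m a (Pi.single j r) = Ideal.Quotient.mk _ (r * a ^ (m - (j : ℕ))) := by
  have h : phiP m a (Pi.single j r) =
      Ideal.Quotient.mk _ (∑ i, (Pi.single j r : Fin m → R) i * a ^ (m - (i : ℕ))) := rfl
  rw [h]
  congr 1
  simp [Pi.single_apply, ite_mul, Finset.sum_ite_eq']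

theorem phiP_ee (m : ℕ) (a : R) (j : Fin m) :
    phiP m a (ee j) = Ideal.Quotient.mk _ (a ^ (m - (j : ℕ))) := by
  rw [ee, phiP_single, one_mul]

theorem ker_phiP (m : ℕ) [NeZero m] (a : R) : LinearMap.ker (phiP m a) = cycP m a := by
  apply le_antisymm
  · intro x hx
    rw [LinearMap.mem_ker] at hx
    have hc : (∑ i, x i * a ^ (m - (i : ℕ))) ∈ Ideal.span {(1:R) - a ^ m} := by
      rwa [← Ideal.Quotient.eq_zero_iff_mem]
    obtain ⟨f, hf⟩ := Ideal.mem_span_singleton'.mp hc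
    have h1 : ∑ i, x i • (ee i : Fin m → R) = x := by
      simp only [ee, ← Pi.single_smul, smul_eq_mul, mul_one, Finset.univ_sum_single]
    have hx2 : x = (∑ i, x i • ((ee i : Fin m → R) - a ^ (m - (i : ℕ)) • ee 0))
        + f • (((1:R) - a ^ m) • (ee 0 : Fin m → R)) := by
      simp only [smul_sub, Finset.sum_sub_distrib, h1, smul_smul, ← Finset.sum_smul, hf]
      abel
    rw [hx2]
    obtain ⟨k, rfl⟩ := Nat.exists_eq_succ_of_ne_zero (NeZero.ne m)
    exact Submodule.add_mem _
      (Submodule.sum_mem _ fun i _ => Submodule.smul_mem _ _ (cycP_key k a i))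
      (Submodule.smul_mem _ _ (cycP_key2 (k+1) a))
  · rw [cycP, Submodule.span_le]
    rintro v ⟨i, rfl⟩
    simp only [SetLike.mem_coe, LinearMap.mem_ker, map_sub, map_smul, phiP_ee]
    obtain ⟨k, rfl⟩ := Nat.exists_eq_succ_of_ne_zero (NeZero.ne m)
    by_cases h : i = 0
    · subst h
      rw [fin_zero_sub_one]
      simp only [Fin.val_last, Fin.val_zero, Nat.sub_zero]
      have he : k + 1 - k = 1 := by omega
      rw [he, pow_one, Algebra.smul_def, Ideal.Quotient.algebraMap_eq, ← map_mul, ← map_sub,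
        Ideal.Quotient.eq_zero_iff_mem]
      have : a - a * a ^ (k+1) = a * ((1:R) - a ^ (k+1)) := by ring
      rw [this]
      exact Ideal.mul_mem_left _ _ (Ideal.subset_span rfl)
    · have hv : ((i - 1 : Fin (k+1)) : ℕ) = (i : ℕ) - 1 := by
        rw [Fin.coe_sub_one, if_neg h]
      have he : k + 1 - ((i : ℕ) - 1) = (k + 1 - (i : ℕ)) + 1 := by
        have h1 : 0 < (i : ℕ) := Fin.pos_iff_ne_zero.mpr h
        have h2 : (i : ℕ) < k + 1 := i.isLt
        omega
      rw [hv, he, Algebra.smul_def, Ideal.Quotient.algebraMap_eq, ← map_mul, ← map_sub,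
        ← pow_succ']
      simp

theorem phiP_surjective (m : ℕ) [NeZero m] (a : R) : Function.Surjective (phiP m a) := by
  intro y
  obtain ⟨r, rfl⟩ := Ideal.Quotient.mk_surjective y
  refine ⟨Pi.single 0 r, ?_⟩
  rw [phiP_single, Fin.val_zero, Nat.sub_zero, Ideal.Quotient.mk_eq_mk_iff_sub_mem]
  have : r * a ^ m - r = (-r) * ((1:R) - a ^ m) := by ring
  rw [this]
  exact Ideal.mul_mem_left _ _ (Ideal.subset_span rfl)

noncomputable def cycPEquiv (m : ℕ) [NeZero m] (a : R) :
    ((Fin m → R) ⧸ cycP m a) ≃ₗ[R] R ⧸ Ideal.span {(1:R) - a ^ m} :=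
  (Submodule.quotEquivOfEq _ _ (ker_phiP m a).symm).trans
    ((phiP m a).quotKerEquivOfSurjective (phiP_surjective m a))



noncomputable def quotProdEquiv {M N : Type*} [AddCommGroup M] [AddCommGroup N]
    [Module R M] [Module R N] (p : Submodule R M) (q : Submodule R N) :
    ((M × N) ⧸ p.prod q) ≃ₗ[R] (M ⧸ p) × (N ⧸ q) :=
  (Submodule.quotEquivOfEq (p.prod q) (LinearMap.ker (p.mkQ.prodMap q.mkQ))
      (by rw [LinearMap.ker_prodMap, Submodule.ker_mkQ, Submodule.ker_mkQ])).trans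
    ((p.mkQ.prodMap q.mkQ).quotKerEquivOfSurjective
      (by
        rw [LinearMap.coe_prodMap]
        exact (p.mkQ_surjective).prodMap (q.mkQ_surjective)))

end aux

open LaurentPolynomial

set_option maxHeartbeats 1000000 in
/-- For `n > 0` and `R = ℤ[t,t⁻¹]`, the quotient of
`M = (Fin (2n) → R) × (Fin (2n) → R)` by the submodule spanned by the elements
`((t - 1) • e_i + e_{i-1}, 0)` and `(0, (t⁻¹ - 1) • e_i + e_{i+1})`
(indices cyclic in `Fin (2n)`) is isomorphic as an `R`-module to
`(R ⧸ (1 - (1 - t)^(2n))) × (R ⧸ (1 - (1 - t⁻¹)^(2n)))`. -/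
theorem wheel_homology_module (n : ℕ) (hn : 0 < n) :
    haveI : NeZero (2 * n) := ⟨by omega⟩
    Nonempty
      ((((Fin (2 * n) → LaurentPolynomial ℤ) × (Fin (2 * n) → LaurentPolynomial ℤ)) ⧸
          Submodule.span (LaurentPolynomial ℤ)
            ((Set.range fun i : Fin (2 * n) =>
                (((T 1 - 1 : LaurentPolynomial ℤ) •
                      (Pi.single i (1 : LaurentPolynomial ℤ) :
                        Fin (2 * n) → LaurentPolynomial ℤ) +
                    Pi.single (i - 1) (1 : LaurentPolynomial ℤ), 0) :
                  (Fin (2 * n) → LaurentPolynomial ℤ) × (Fin (2 * n) → LaurentPolynomial ℤ))) ∪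
              (Set.range fun i : Fin (2 * n) =>
                ((0, (T (-1) - 1 : LaurentPolynomial ℤ) •
                      (Pi.single i (1 : LaurentPolynomial ℤ) :
                        Fin (2 * n) → LaurentPolynomial ℤ) +
                    Pi.single (i + 1) (1 : LaurentPolynomial ℤ)) :
                  (Fin (2 * n) → LaurentPolynomial ℤ) ×
                    (Fin (2 * n) → LaurentPolynomial ℤ))))) ≃ₗ[LaurentPolynomial ℤ]
        ((LaurentPolynomial ℤ ⧸
            Ideal.span {(1 : LaurentPolynomial ℤ) - (1 - T 1) ^ (2 * n)}) ×
          (LaurentPolynomial ℤ ⧸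
            Ideal.span {(1 : LaurentPolynomial ℤ) - (1 - T (-1)) ^ (2 * n)}))) := by
  haveI : NeZero (2 * n) := ⟨by omega⟩
  set R := LaurentPolynomial ℤ with hR
  refine ⟨?_⟩
  have hA : (Set.range fun i : Fin (2 * n) =>
        (((T 1 - 1 : R) •
              (Pi.single i (1 : R) : Fin (2 * n) → R) +
            Pi.single (i - 1) (1 : R), 0) :
          (Fin (2 * n) → R) × (Fin (2 * n) → R)))
      = LinearMap.inl R (Fin (2 * n) → R) (Fin (2 * n) → R) ''
          Set.range (fun i : Fin (2 * n) => ee (i - 1) - (1 - T 1 : R) • ee i) := by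
    have hgA : (fun i : Fin (2 * n) =>
        (((T 1 - 1 : R) • (Pi.single i (1 : R) : Fin (2 * n) → R) +
            Pi.single (i - 1) (1 : R), 0) : (Fin (2 * n) → R) × (Fin (2 * n) → R)))
        = (LinearMap.inl R (Fin (2 * n) → R) (Fin (2 * n) → R)) ∘
            (fun i : Fin (2 * n) => ee (i - 1) - (1 - T 1 : R) • ee i) := by
      funext i
      refine Prod.ext ?_ rfl
      show (T 1 - 1 : R) • (ee i : Fin (2 * n) → R) + ee (i - 1)
          = (ee (i-1) : Fin (2 * n) → R) - (1 - T 1 : R) • ee i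
      module
    rw [hgA]
    exact Set.range_comp _ _
  have hB : (Set.range fun i : Fin (2 * n) =>
        ((0, (T (-1) - 1 : R) •
              (Pi.single i (1 : R) : Fin (2 * n) → R) +
            Pi.single (i + 1) (1 : R)) :
          (Fin (2 * n) → R) × (Fin (2 * n) → R)))
      = LinearMap.inr R (Fin (2 * n) → R) (Fin (2 * n) → R) ''
          Set.range (fun i : Fin (2 * n) => ee (i + 1) - (1 - T (-1) : R) • ee i) := by
    have hgB : (fun i : Fin (2 * n) =>
        ((0, (T (-1) - 1 : R) • (Pi.single i (1 : R) : Fin (2 * n) → R) +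
            Pi.single (i + 1) (1 : R)) : (Fin (2 * n) → R) × (Fin (2 * n) → R)))
        = (LinearMap.inr R (Fin (2 * n) → R) (Fin (2 * n) → R)) ∘
            (fun i : Fin (2 * n) => ee (i + 1) - (1 - T (-1) : R) • ee i) := by
      funext i
      refine Prod.ext rfl ?_
      show (T (-1) - 1 : R) • (ee i : Fin (2 * n) → R) + ee (i + 1)
          = (ee (i+1) : Fin (2 * n) → R) - (1 - T (-1) : R) • ee i
      module
    rw [hgB]
    exact Set.range_comp _ _
  have hspan : Submodule.span R
        ((Set.range fun i : Fin (2 * n) =>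
            (((T 1 - 1 : R) • (Pi.single i (1 : R) : Fin (2 * n) → R) +
                Pi.single (i - 1) (1 : R), 0) :
              (Fin (2 * n) → R) × (Fin (2 * n) → R))) ∪
          (Set.range fun i : Fin (2 * n) =>
            ((0, (T (-1) - 1 : R) • (Pi.single i (1 : R) : Fin (2 * n) → R) +
                Pi.single (i + 1) (1 : R)) :
              (Fin (2 * n) → R) × (Fin (2 * n) → R))))
      = (cycP (2 * n) (1 - T 1 : R)).prod (cycS (2 * n) (1 - T (-1) : R)) := by
    rw [hA, hB, LinearMap.span_inl_union_inr]
    rfl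
  exact (Submodule.quotEquivOfEq _ _ hspan).trans
    ((quotProdEquiv _ _).trans
      ((cycPEquiv (2 * n) (1 - T 1 : R)).prodCongr (cycSEquiv (2 * n) (1 - T (-1) : R))))
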